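/- There exist a positive integer k with n = k(p-1) and an isomorphism of ℚ-vector spaces ℚ^n ≅ ℚ(ζ)^k which is equivariant for the ℤ/p-actions, where the generator s of ℤ/p acts on ℚ^n by ρ(s) (extended ℚ-linearly) and on each factor ℚ(ζ) by multiplication by ζ. In particular p-1 divides n. -/

import Mathlib

set_option synthInstance.maxHeartbeats 1000000
set_option maxHeartbeats 1000000

/-- `ζ = e^{2πi/p}`, a primitive `p`-th root of unity in `ℂ`. -/
noncomputable def zetaC (p : ℕ) : ℂ := Complex.exp (2 * Real.pi * Complex.I / p)

/-- The `p`-th cyclotomic field `ℚ(ζ)`, realized as the subfield of `ℂ` generated over `ℚ`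
by `ζ = e^{2πi/p}`. -/
noncomputable def Qzeta (p : ℕ) : Subalgebra ℚ ℂ := Algebra.adjoin ℚ {zetaC p}

/-- `ζ` as an element of `ℚ(ζ)`. -/
noncomputable def zetaQ (p : ℕ) : Qzeta p :=
  ⟨zetaC p, Algebra.self_mem_adjoin_singleton ℚ (zetaC p)⟩

open Polynomial

/-- There are a positive integer `k` with `n = k(p-1)` and an isomorphism of `ℚ`-vector spaces
`ℚⁿ ≅ ℚ(ζ)^k` which is equivariant for the `ℤ/p`-actions, where the generator `s` acts on
`ℚⁿ` by the `ℚ`-linear extension of `ρ(s)` and on each factor `ℚ(ζ)` by multiplication by `ζ`.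
In particular `p - 1` divides `n`. -/
theorem qn_iso_cyclotomic_power (p n : ℕ) (hp : p.Prime) (hodd : Odd p) (hn : 0 < n)
    (ρ : Multiplicative (ZMod p) →* Matrix.GeneralLinearGroup (Fin n) ℤ)
    (hfree : ∀ g : Multiplicative (ZMod p), g ≠ 1 → ∀ v : Fin n → ℤ,
      (ρ g : Matrix (Fin n) (Fin n) ℤ).mulVec v = v → v = 0)
    (s : ZMod p) (hs : addOrderOf s = p) :
    (∃ k : ℕ, 0 < k ∧ n = k * (p - 1) ∧
      ∃ e : (Fin n → ℚ) ≃ₗ[ℚ] (Fin k → Qzeta p),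
        ∀ (v : Fin n → ℚ) (j : Fin k),
          e (((ρ (Multiplicative.ofAdd s) : Matrix (Fin n) (Fin n) ℤ).map
              (Int.cast : ℤ → ℚ)).mulVec v) j =
            zetaQ p * e v j) ∧
      (p - 1) ∣ n := by
  classical
  haveI hfact : Fact p.Prime := ⟨hp⟩
  have hprim : IsPrimitiveRoot (zetaC p) p := Complex.isPrimitiveRoot_exp p hp.pos.ne'
  have hint : IsIntegral ℚ (zetaC p) := by
    refine ⟨X ^ p - 1, monic_X_pow_sub_C 1 hp.pos.ne', ?_⟩
    simp [hprim.pow_eq_one]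
  have hmin : minpoly ℚ (zetaC p) = cyclotomic p ℚ :=
    (cyclotomic_eq_minpoly_rat hprim hp.pos).symm
  set P : ℚ[X] := minpoly ℚ (zetaC p) with hPdef
  haveI : Fact (Irreducible P) := ⟨hmin ▸ cyclotomic.irreducible_rat hp.pos⟩
  have hPne : P ≠ 0 := minpoly.ne_zero hint
  have hPdeg : P.natDegree = p - 1 := by
    rw [hmin, natDegree_cyclotomic, Nat.totient_prime hp]
  -- the matrix
  set A : Matrix (Fin n) (Fin n) ℤ := (ρ (Multiplicative.ofAdd s) : Matrix (Fin n) (Fin n) ℤ)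
    with hAdef
  have hA : A ^ p = 1 := by
    have h1 : (Multiplicative.ofAdd s) ^ p = 1 := by
      have h0 : p • s = 0 := by
        have := addOrderOf_nsmul_eq_zero s
        rwa [hs] at this
      rw [← ofAdd_nsmul, h0]; rfl
    rw [hAdef, ← Units.val_pow_eq_pow_val, ← map_pow, h1, map_one, Units.val_one]
  set B : Matrix (Fin n) (Fin n) ℚ := A.map (Int.cast : ℤ → ℚ) with hBdef
  have hBmap : B = (Int.castRingHom ℚ).mapMatrix A := rfl
  have hB : B ^ p = 1 := by
    rw [hBmap, ← map_pow, hA, map_one]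
  -- det (A - 1) ≠ 0
  have hg : (Multiplicative.ofAdd s) ≠ 1 := by
    intro h
    have hs0 : s = 0 := by simpa using h
    rw [hs0, addOrderOf_zero] at hs
    exact hp.one_lt.ne' hs.symm
  have hdetA : (A - 1).det ≠ 0 := by
    intro h
    obtain ⟨v, hv, hv0⟩ := (Matrix.exists_mulVec_eq_zero_iff).mpr h
    apply hv
    apply hfree _ hg
    have := hv0
    rw [Matrix.sub_mulVec, Matrix.one_mulVec, sub_eq_zero] at this
    exact this
  have hdetB : (B - 1).det ≠ 0 := by
    have : B - 1 = (Int.castRingHom ℚ).mapMatrix (A - 1) := by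
      rw [map_sub, map_one, hBmap]
    rw [this, ← RingHom.map_det]
    intro h
    apply hdetA
    have : ((A - 1).det : ℚ) = 0 := h
    exact_mod_cast this
  have hBunit : IsUnit (B - 1) := (Matrix.isUnit_iff_isUnit_det _).mpr (isUnit_iff_ne_zero.mpr hdetB)
  -- aeval B P = 0
  have hBP : aeval B P = 0 := by
    have hfac : P * (X - 1) = X ^ p - 1 := by
      rw [hmin]; exact cyclotomic_prime_mul_X_sub_one ℚ p
    have h0 : aeval B P * (B - 1) = 0 := by
      have := congrArg (aeval B) hfac
      simpa [map_sub, map_pow, map_mul, aeval_X, aeval_one, hB] using this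
    obtain ⟨u, hu⟩ := hBunit
    calc aeval B P = aeval B P * (B - 1) * ↑u⁻¹ := by
          rw [← hu, Units.mul_inv_cancel_right]
      _ = 0 := by rw [h0, zero_mul]
  -- the endomorphism
  set f : Module.End ℚ (Fin n → ℚ) := Matrix.toLinAlgEquiv' B with hfdef
  have hfP : aeval f P = 0 := by
    have h := Polynomial.aeval_algHom_apply
      (Matrix.toLinAlgEquiv' : Matrix (Fin n) (Fin n) ℚ ≃ₐ[ℚ] _) B P
    rw [hfdef, h, hBP, map_zero]
  set K := AdjoinRoot P with hKdef
  have hlift : ∀ a ∈ Ideal.span {P}, (Polynomial.aeval f).toRingHom a = 0 := by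
    intro a ha
    obtain ⟨c, rfl⟩ := Ideal.mem_span_singleton.mp ha
    simp only [AlgHom.toRingHom_eq_coe, RingHom.coe_coe, map_mul]
    rw [hfP, zero_mul]
  set Φ : K →+* Module.End ℚ (Fin n → ℚ) :=
    Ideal.Quotient.lift (Ideal.span {P}) (Polynomial.aeval f).toRingHom hlift with hΦdef
  have hΦmk : ∀ g : ℚ[X], Φ (AdjoinRoot.mk P g) = aeval f g := fun g => rfl
  have hΦroot : Φ (AdjoinRoot.root P) = f := by
    rw [← AdjoinRoot.mk_X, hΦmk, aeval_X]
  have hΦalg : ∀ q : ℚ, Φ (algebraMap ℚ K q) = algebraMap ℚ (Module.End ℚ (Fin n → ℚ)) q := by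
    intro q
    show Φ (AdjoinRoot.mk P (C q)) = _
    rw [hΦmk, aeval_C]
  letI : Module K (Fin n → ℚ) := Module.compHom _ Φ
  have hsmul : ∀ (c : K) (v : Fin n → ℚ), c • v = Φ c v := fun c v => rfl
  haveI : IsScalarTower ℚ K (Fin n → ℚ) := by
    constructor
    intro q c v
    rw [hsmul, hsmul, Algebra.smul_def q c, map_mul, hΦalg]
    show (algebraMap ℚ (Module.End ℚ (Fin n → ℚ)) q) (Φ c v) = q • Φ c v
    rw [Module.algebraMap_end_apply]
  haveI : Module.Finite K (Fin n → ℚ) := Module.Finite.of_restrictScalars_finite ℚ K _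
  set k := Module.finrank K (Fin n → ℚ) with hkdef
  have hdimK : Module.finrank ℚ K = p - 1 := by
    rw [(AdjoinRoot.powerBasis hPne).finrank, AdjoinRoot.powerBasis_dim, hPdeg]
  have hnk : n = k * (p - 1) := by
    have h1 : Module.finrank ℚ K * Module.finrank K (Fin n → ℚ)
        = Module.finrank ℚ (Fin n → ℚ) := Module.finrank_mul_finrank ℚ K _
    rw [hdimK, Module.finrank_fin_fun] at h1
    rw [← h1, ← hkdef, mul_comm]
  have hkpos : 0 < k := by
    rcases Nat.eq_zero_or_pos k with h | h
    · rw [h, zero_mul] at hnk; omega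
    · exact h
  -- the equivalences
  set e' : (Fin n → ℚ) ≃ₗ[K] (Fin k → K) := (Module.finBasis K (Fin n → ℚ)).equivFun with he'def
  set ψ : K ≃ₐ[ℚ] Qzeta p := minpoly.equivAdjoin hint with hψdef
  have hψroot : ψ (AdjoinRoot.root P) = zetaQ p := by
    rw [hψdef]
    show AdjoinRoot.Minpoly.toAdjoin ℚ (zetaC p) (AdjoinRoot.root P) = zetaQ p
    rw [AdjoinRoot.Minpoly.coe_toAdjoin, AdjoinRoot.liftAlgHom_root]
    rfl
  set e : (Fin n → ℚ) ≃ₗ[ℚ] (Fin k → Qzeta p) :=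
    (e'.restrictScalars ℚ).trans (LinearEquiv.piCongrRight fun _ => ψ.toLinearEquiv) with hedef
  have hkey : ∀ v : Fin n → ℚ, B.mulVec v = (AdjoinRoot.root P) • v := by
    intro v
    rw [hsmul, hΦroot, hfdef, Matrix.toLinAlgEquiv'_apply]
  refine ⟨⟨k, hkpos, hnk, e, ?_⟩, ⟨k, by rw [mul_comm] at hnk; exact hnk⟩⟩
  intro v j
  have hBv : ((ρ (Multiplicative.ofAdd s) : Matrix (Fin n) (Fin n) ℤ).map
      (Int.cast : ℤ → ℚ)).mulVec v = B.mulVec v := rfl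
  rw [hBv, hkey]
  show (LinearEquiv.piCongrRight fun _ => ψ.toLinearEquiv) (e' ((AdjoinRoot.root P) • v)) j
      = zetaQ p * (LinearEquiv.piCongrRight fun _ => ψ.toLinearEquiv) (e' v) j
  rw [map_smul]
  show ψ ((AdjoinRoot.root P) • e' v j) = zetaQ p * ψ (e' v j)
  rw [smul_eq_mul, map_mul, hψroot]
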